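/- For ζ ∈ [0,1) define μ₁(ζ) := inf{ (∫_ζ^1 y'(x)² dx + k₁² y(1)² − y(ζ)²/2) / ∫_ζ^1 y(x)² dx : y absolutely continuous on [ζ,1] with y' ∈ L²[ζ,1], y not a.e. zero } (the first eigenvalue of −y'' = λ y on [ζ,1] with boundary conditions 2y'(ζ) + y(ζ) = 0 and y'(1) + k₁² y(1) = 0). Then: if k₁² = 1/2 then μ₁(ζ) = −1/4 for all ζ ∈ [0,1); if k₁² > 1/2 then μ₁ is strictly increasing on [0,1), μ₁(ζ) → +∞ as ζ → 1⁻, and μ₁(0) > −1/4; and if k₁² < 1/2 then μ₁(ζ) < −1/4 for all ζ ∈ [0,1). -/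

import Mathlib

open MeasureTheory Set Real Filter

/-- A test function on `[a,b]`: `y` is absolutely continuous on `[a,b]` with
derivative `g` belonging to `L²[a,b]`. -/
def IsTestOn (a b : ℝ) (y g : ℝ → ℝ) : Prop :=
  (∀ x ∈ Icc a b, y x = y a + ∫ t in a..x, g t) ∧
  IntegrableOn g (Icc a b) ∧
  IntegrableOn (fun x => (g x) ^ 2) (Icc a b)

/-- `μ₁(ζ)`: the first eigenvalue of `-y'' = λ y` on `[ζ,1]` with boundary conditions
`2 y'(ζ) + y(ζ) = 0`, `y'(1) + k₁² y(1) = 0`, defined via the Rayleigh quotient. -/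
noncomputable def mu1 (k1 ζ : ℝ) : ℝ :=
  sInf { r : ℝ | ∃ y g : ℝ → ℝ, IsTestOn ζ 1 y g ∧ (0 < ∫ x in ζ..(1:ℝ), (y x) ^ 2) ∧
    r = ((∫ x in ζ..(1:ℝ), (g x) ^ 2) + k1 ^ 2 * (y 1) ^ 2 - (y ζ) ^ 2 / 2) /
        (∫ x in ζ..(1:ℝ), (y x) ^ 2) }


open intervalIntegral

lemma contmul_int (a b : ℝ) (f g : ℝ → ℝ) (hf : ContinuousOn f (Icc a b))
    (hg : IntegrableOn g (Icc a b)) : IntegrableOn (fun x => f x * g x) (Icc a b) := by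
  obtain ⟨C, hC⟩ := (isCompact_Icc (a := a) (b := b)).exists_bound_of_continuousOn hf
  apply Integrable.bdd_mul hg (hf.aestronglyMeasurable measurableSet_Icc)
  · filter_upwards [ae_restrict_mem measurableSet_Icc] with x hx
    exact hC x hx

lemma primitive_eq (a b x : ℝ) (hax : a ≤ x) (hxb : x ≤ b) (g : ℝ → ℝ) :
    (∫ t in a..x, g t) = ∫ t, (Iic x).indicator g t ∂(volume.restrict (Ioc a b)) := by
  rw [intervalIntegral.integral_of_le hax, MeasureTheory.integral_indicator measurableSet_Iic,
    Measure.restrict_restrict measurableSet_Iic]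
  congr 1
  rw [Set.Iic_inter_Ioc_of_le hxb]

lemma fubini_pair (a b : ℝ) (hab : a ≤ b) (g₁ g₂ : ℝ → ℝ)
    (h₁ : IntegrableOn g₁ (Icc a b)) (h₂ : IntegrableOn g₂ (Icc a b)) :
    (∫ x in a..b, g₁ x * (∫ t in a..x, g₂ t)) + (∫ x in a..b, (∫ t in a..x, g₁ t) * g₂ x)
      = (∫ t in a..b, g₁ t) * (∫ t in a..b, g₂ t) := by
  set μ := volume.restrict (Ioc a b) with hμ
  have h₁' : Integrable g₁ μ := h₁.mono_set Ioc_subset_Icc_self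
  have h₂' : Integrable g₂ μ := h₂.mono_set Ioc_subset_Icc_self
  have hsle : MeasurableSet {p : ℝ × ℝ | p.2 ≤ p.1} := measurableSet_le measurable_snd measurable_fst
  have hsle' : MeasurableSet {p : ℝ × ℝ | p.1 ≤ p.2} := measurableSet_le measurable_fst measurable_snd
  have hintA : Integrable (Function.uncurry fun x t => (if t ≤ x then g₁ x * g₂ t else 0)) (μ.prod μ) := by
    have base : Integrable (fun p : ℝ × ℝ => g₁ p.1 * g₂ p.2) (μ.prod μ) := h₁'.mul_prod h₂'
    have he : Function.uncurry (fun x t => (if t ≤ x then g₁ x * g₂ t else 0))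
        = {p : ℝ × ℝ | p.2 ≤ p.1}.indicator (fun p => g₁ p.1 * g₂ p.2) := by
      ext p; by_cases h : p.2 ≤ p.1 <;> simp [Function.uncurry, Set.indicator_apply, h]
    rw [he]; exact base.indicator hsle
  have hintB : Integrable (Function.uncurry fun x t => (if x ≤ t then g₁ x * g₂ t else 0)) (μ.prod μ) := by
    have base : Integrable (fun p : ℝ × ℝ => g₁ p.1 * g₂ p.2) (μ.prod μ) := h₁'.mul_prod h₂'
    have he : Function.uncurry (fun x t => (if x ≤ t then g₁ x * g₂ t else 0))
        = {p : ℝ × ℝ | p.1 ≤ p.2}.indicator (fun p => g₁ p.1 * g₂ p.2) := by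
      ext p; by_cases h : p.1 ≤ p.2 <;> simp [Function.uncurry, Set.indicator_apply, h]
    rw [he]; exact base.indicator hsle'
  have hintC : Integrable (Function.uncurry fun x t => (if t ≤ x then g₁ t * g₂ x else 0)) (μ.prod μ) := by
    have base : Integrable (fun p : ℝ × ℝ => g₂ p.1 * g₁ p.2) (μ.prod μ) := h₂'.mul_prod h₁'
    have he : Function.uncurry (fun x t => (if t ≤ x then g₁ t * g₂ x else 0))
        = {p : ℝ × ℝ | p.2 ≤ p.1}.indicator (fun p => g₂ p.1 * g₁ p.2) := by
      ext p; by_cases h : p.2 ≤ p.1 <;> simp [Function.uncurry, Set.indicator_apply, h, mul_comm]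
    rw [he]; exact base.indicator hsle
  have hT1 : (∫ x in a..b, g₁ x * (∫ t in a..x, g₂ t))
      = ∫ x, (∫ t, (if t ≤ x then g₁ x * g₂ t else 0) ∂μ) ∂μ := by
    rw [intervalIntegral.integral_of_le hab]
    apply setIntegral_congr_fun measurableSet_Ioc
    intro x hx
    show g₁ x * (∫ t in a..x, g₂ t) = _
    rw [primitive_eq a b x (le_of_lt hx.1) hx.2 g₂, ← MeasureTheory.integral_const_mul]
    congr 1 with t
    by_cases h : t ≤ x <;> simp [Set.indicator_apply, h]
  have hT2 : (∫ x in a..b, (∫ t in a..x, g₁ t) * g₂ x)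
      = ∫ x, (∫ t, (if t ≤ x then g₁ t * g₂ x else 0) ∂μ) ∂μ := by
    rw [intervalIntegral.integral_of_le hab]
    apply setIntegral_congr_fun measurableSet_Ioc
    intro x hx
    show (∫ t in a..x, g₁ t) * g₂ x = _
    rw [primitive_eq a b x (le_of_lt hx.1) hx.2 g₁, mul_comm, ← MeasureTheory.integral_const_mul]
    congr 1 with t
    by_cases h : t ≤ x <;> simp [Set.indicator_apply, h, mul_comm]
  have hswap : (∫ x, (∫ t, (if t ≤ x then g₁ t * g₂ x else 0) ∂μ) ∂μ)
      = ∫ t, (∫ x, (if t ≤ x then g₁ t * g₂ x else 0) ∂μ) ∂μ :=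
    integral_integral_swap hintC
  have hT2' : (∫ x in a..b, (∫ t in a..x, g₁ t) * g₂ x)
      = ∫ x, (∫ t, (if x ≤ t then g₁ x * g₂ t else 0) ∂μ) ∂μ := by
    rw [hT2, hswap]
  have key : ∀ x : ℝ, (∫ t, (if t ≤ x then g₁ x * g₂ t else 0) ∂μ)
      + (∫ t, (if x ≤ t then g₁ x * g₂ t else 0) ∂μ)
      = g₁ x * ∫ t, g₂ t ∂μ := by
    intro x
    have hIA : Integrable (fun t => (if t ≤ x then g₁ x * g₂ t else 0)) μ := by
      have h0 : Integrable (fun t => g₁ x * g₂ t) μ := h₂'.const_mul _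
      refine (h0.indicator (measurableSet_Iic (a := x))).congr ?_
      filter_upwards with t
      by_cases h : t ≤ x <;> simp [Set.indicator_apply, h]
    have hIB : Integrable (fun t => (if x < t then g₁ x * g₂ t else 0)) μ := by
      have h0 : Integrable (fun t => g₁ x * g₂ t) μ := h₂'.const_mul _
      refine (h0.indicator (measurableSet_Ioi (a := x))).congr ?_
      filter_upwards with t
      by_cases h : x < t <;> simp [Set.indicator_apply, h]
    have h2 : (∫ t, (if x ≤ t then g₁ x * g₂ t else 0) ∂μ)
        = ∫ t, (if x < t then g₁ x * g₂ t else 0) ∂μ := by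
      apply MeasureTheory.integral_congr_ae
      have hne : ∀ᵐ t : ℝ, t ≠ x := by simpa [ae_iff] using measure_singleton x
      filter_upwards [ae_restrict_of_ae hne] with t ht
      rcases lt_trichotomy x t with h | h | h
      · simp [le_of_lt h, h]
      · exact absurd h.symm ht
      · simp [not_le.2 h, not_lt.2 (le_of_lt h)]
    rw [h2, ← integral_add hIA hIB, ← MeasureTheory.integral_const_mul]
    apply MeasureTheory.integral_congr_ae
    filter_upwards with t
    by_cases h : t ≤ x
    · simp [h, not_lt.2 h]
    · simp [h, not_le.1 h]
  have hA' : Integrable (fun x => ∫ t, (if t ≤ x then g₁ x * g₂ t else 0) ∂μ) μ :=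
    hintA.integral_prod_left
  have hB' : Integrable (fun x => ∫ t, (if x ≤ t then g₁ x * g₂ t else 0) ∂μ) μ :=
    hintB.integral_prod_left
  rw [hT1, hT2', ← integral_add hA' hB',
    intervalIntegral.integral_of_le hab, intervalIntegral.integral_of_le hab, ← MeasureTheory.integral_mul_const]
  apply MeasureTheory.integral_congr_ae
  filter_upwards with x
  show (∫ t, (if t ≤ x then g₁ x * g₂ t else 0) ∂μ) + (∫ t, (if x ≤ t then g₁ x * g₂ t else 0) ∂μ)
      = g₁ x * ∫ t, g₂ t ∂μ
  exact key x

lemma test_cont {a b : ℝ} {y g : ℝ → ℝ} (hab : a ≤ b) (hT : IsTestOn a b y g) :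
    ContinuousOn y (Icc a b) := by
  have h1 : ContinuousOn (fun x => y a + ∫ t in a..x, g t) (Icc a b) := by
    apply ContinuousOn.add continuousOn_const
    have := continuousOn_primitive_interval (a := a) (b := b) (f := g) (μ := volume)
      (by rw [uIcc_of_le hab]; exact hT.2.1)
    rwa [uIcc_of_le hab] at this
  exact h1.congr hT.1

lemma chain_sq {a b : ℝ} {y g : ℝ → ℝ} (hab : a ≤ b) (hT : IsTestOn a b y g)
    {x : ℝ} (hx : x ∈ Icc a b) :
    (∫ t in a..x, 2 * y t * g t) = (y x) ^ 2 - (y a) ^ 2 := by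
  obtain ⟨hy, hg, hg2⟩ := hT
  have hgx : IntegrableOn g (Icc a x) := hg.mono_set (Icc_subset_Icc le_rfl hx.2)
  have hFc : ContinuousOn (fun u => ∫ t in a..u, g t) (Icc a x) := by
    have := continuousOn_primitive_interval (a := a) (b := x) (f := g) (μ := volume)
      (by rwa [uIcc_of_le hx.1])
    rwa [uIcc_of_le hx.1] at this
  have hFg : IntegrableOn (fun t => (∫ s in a..t, g s) * g t) (Icc a x) :=
    contmul_int a x _ g hFc hgx
  have hfub := fubini_pair a x hx.1 g g hgx hgx
  have heq : (∫ t in a..x, g t * (∫ s in a..t, g s)) = ∫ t in a..x, (∫ s in a..t, g s) * g t := by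
    apply intervalIntegral.integral_congr
    intro t _
    exact mul_comm _ _
  rw [heq] at hfub
  -- hfub : 2 * ∫ F g = (F x)^2   (as sum of equal terms)
  have hFgint : IntervalIntegrable (fun t => (∫ s in a..t, g s) * g t) volume a x :=
    (intervalIntegrable_iff_integrableOn_Icc_of_le hx.1).2 hFg
  have hgint : IntervalIntegrable g volume a x :=
    (intervalIntegrable_iff_integrableOn_Icc_of_le hx.1).2 hgx
  have hyg : (∫ t in a..x, 2 * y t * g t)
      = ∫ t in a..x, (2 * y a * g t + 2 * ((∫ s in a..t, g s) * g t)) := by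
    apply intervalIntegral.integral_congr
    intro t ht
    rw [uIcc_of_le hx.1] at ht
    have h5 : y t = y a + ∫ s in a..t, g s := hy t ⟨ht.1, le_trans ht.2 hx.2⟩
    show 2 * y t * g t = 2 * y a * g t + 2 * ((∫ s in a..t, g s) * g t)
    rw [h5]; ring
  rw [hyg, intervalIntegral.integral_add ((hgint.const_mul _)) (hFgint.const_mul _),
    intervalIntegral.integral_const_mul, intervalIntegral.integral_const_mul]
  have hyx : y x = y a + ∫ s in a..x, g s := hy x hx
  rw [hyx]
  nlinarith [hfub]

lemma ibp_sq {a b : ℝ} {p p' y g : ℝ → ℝ} (hab : a ≤ b)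
    (hp : ∀ x ∈ Icc a b, HasDerivAt p (p' x) x) (hp' : ContinuousOn p' (Icc a b))
    (hT : IsTestOn a b y g) :
    (∫ x in a..b, (p' x * (y x) ^ 2 + 2 * p x * y x * g x))
      = p b * (y b) ^ 2 - p a * (y a) ^ 2 := by
  have hyc : ContinuousOn y (Icc a b) := test_cont hab hT
  have hpc : ContinuousOn p (Icc a b) := fun x hx => ((hp x hx).continuousAt).continuousWithinAt
  obtain ⟨hy, hg, hg2⟩ := hT
  have hFTCp : ∀ x ∈ Icc a b, (∫ t in a..x, p' t) = p x - p a := by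
    intro x hx
    apply intervalIntegral.integral_eq_sub_of_hasDerivAt
    · intro t ht
      rw [uIcc_of_le hx.1] at ht
      exact hp t ⟨ht.1, le_trans ht.2 hx.2⟩
    · apply ContinuousOn.intervalIntegrable
      rw [uIcc_of_le hx.1]
      exact hp'.mono (Icc_subset_Icc le_rfl hx.2)
  have hyg2 : IntegrableOn (fun t => 2 * y t * g t) (Icc a b) := by
    have := contmul_int a b (fun t => 2 * y t) g (continuousOn_const.mul hyc) hg
    simpa using this
  have hp'int : IntegrableOn p' (Icc a b) := hp'.integrableOn_Icc
  have hfub := fubini_pair a b hab p' (fun t => 2 * y t * g t) hp'int hyg2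
  -- rewrite inner integrals
  have e1 : (∫ x in a..b, p' x * (∫ t in a..x, 2 * y t * g t))
      = ∫ x in a..b, p' x * ((y x) ^ 2 - (y a) ^ 2) := by
    apply intervalIntegral.integral_congr
    intro x hx
    rw [uIcc_of_le hab] at hx
    show p' x * (∫ t in a..x, 2 * y t * g t) = p' x * ((y x) ^ 2 - (y a) ^ 2)
    rw [chain_sq hab ⟨hy, hg, hg2⟩ hx]
  have e2 : (∫ x in a..b, (∫ t in a..x, p' t) * (2 * y x * g x))
      = ∫ x in a..b, (p x - p a) * (2 * y x * g x) := by
    apply intervalIntegral.integral_congr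
    intro x hx
    rw [uIcc_of_le hab] at hx
    show (∫ t in a..x, p' t) * (2 * y x * g x) = (p x - p a) * (2 * y x * g x)
    rw [hFTCp x hx]
  rw [e1, e2] at hfub
  have hch := chain_sq hab ⟨hy, hg, hg2⟩ (right_mem_Icc.2 hab)
  have hFTCb := hFTCp b (right_mem_Icc.2 hab)
  -- integrability pieces
  have hp'y2 : IntervalIntegrable (fun x => p' x * (y x) ^ 2) volume a b :=
    (intervalIntegrable_iff_integrableOn_Icc_of_le hab).2
      (contmul_int a b p' (fun x => (y x)^2) hp' (((hyc.pow 2)).integrableOn_Icc))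
  have hpyg : IntervalIntegrable (fun x => p x * (2 * y x * g x)) volume a b :=
    (intervalIntegrable_iff_integrableOn_Icc_of_le hab).2
      (contmul_int a b p (fun x => 2 * y x * g x) hpc hyg2)
  have hygI : IntervalIntegrable (fun x => 2 * y x * g x) volume a b :=
    (intervalIntegrable_iff_integrableOn_Icc_of_le hab).2 hyg2
  have hp'I : IntervalIntegrable p' volume a b :=
    (intervalIntegrable_iff_integrableOn_Icc_of_le hab).2 hp'int
  have s1 : (∫ x in a..b, p' x * ((y x) ^ 2 - (y a) ^ 2))
      = (∫ x in a..b, p' x * (y x) ^ 2) - (y a) ^ 2 * (∫ x in a..b, p' x) := by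
    rw [← intervalIntegral.integral_const_mul]
    rw [← intervalIntegral.integral_sub hp'y2 (hp'I.const_mul _)]
    apply intervalIntegral.integral_congr
    intro x _; ring
  have s2 : (∫ x in a..b, (p x - p a) * (2 * y x * g x))
      = (∫ x in a..b, p x * (2 * y x * g x)) - p a * (∫ x in a..b, 2 * y x * g x) := by
    rw [← intervalIntegral.integral_const_mul]
    rw [← intervalIntegral.integral_sub hpyg (hygI.const_mul _)]
    apply intervalIntegral.integral_congr
    intro x _; ring
  rw [s1, s2, hch] at hfub
  have hintp' : (∫ x in a..b, p' x) = p b - p a := hFTCb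
  rw [hintp'] at hfub
  have goal1 : (∫ x in a..b, (p' x * (y x) ^ 2 + 2 * p x * y x * g x))
      = (∫ x in a..b, p' x * (y x) ^ 2) + (∫ x in a..b, p x * (2 * y x * g x)) := by
    rw [← intervalIntegral.integral_add hp'y2 hpyg]
    apply intervalIntegral.integral_congr
    intro x _; ring
  rw [goal1]
  nlinarith [hfub]

def RSet (k1 ζ : ℝ) : Set ℝ :=
  { r : ℝ | ∃ y g : ℝ → ℝ, IsTestOn ζ 1 y g ∧ (0 < ∫ x in ζ..(1:ℝ), (y x) ^ 2) ∧
    r = ((∫ x in ζ..(1:ℝ), (g x) ^ 2) + k1 ^ 2 * (y 1) ^ 2 - (y ζ) ^ 2 / 2) /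
        (∫ x in ζ..(1:ℝ), (y x) ^ 2) }

lemma mu1_eq_sInf (k1 ζ : ℝ) : mu1 k1 ζ = sInf (RSet k1 ζ) := rfl

lemma split {a b lam : ℝ} {p p' y g : ℝ → ℝ} (hab : a ≤ b)
    (hp : ∀ x ∈ Icc a b, HasDerivAt p (p' x) x) (hp' : ContinuousOn p' (Icc a b))
    (hT : IsTestOn a b y g) :
    (∫ x in a..b, (g x) ^ 2) - lam * (∫ x in a..b, (y x) ^ 2)
      = (∫ x in a..b, (g x - p x * y x) ^ 2)
        + (∫ x in a..b, (-(p' x + (p x) ^ 2 + lam)) * (y x) ^ 2)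
        + (p b * (y b) ^ 2 - p a * (y a) ^ 2) := by
  have hyc : ContinuousOn y (Icc a b) := test_cont hab hT
  have hpc : ContinuousOn p (Icc a b) := fun x hx => ((hp x hx).continuousAt).continuousWithinAt
  have hg := hT.2.1
  have hg2 := hT.2.2
  have hg2I : IntervalIntegrable (fun x => (g x) ^ 2) volume a b :=
    (intervalIntegrable_iff_integrableOn_Icc_of_le hab).2 hg2
  have hy2I : IntervalIntegrable (fun x => (y x) ^ 2) volume a b :=
    (intervalIntegrable_iff_integrableOn_Icc_of_le hab).2 ((hyc.pow 2).integrableOn_Icc)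
  have hpygI : IntervalIntegrable (fun x => 2 * p x * y x * g x) volume a b := by
    refine (intervalIntegrable_iff_integrableOn_Icc_of_le hab).2 ?_
    have := contmul_int a b (fun x => 2 * p x * y x) g
      ((continuousOn_const.mul hpc).mul hyc) hg
    simpa using this
  have hpy2I : IntervalIntegrable (fun x => (p x * y x) ^ 2) volume a b :=
    (intervalIntegrable_iff_integrableOn_Icc_of_le hab).2 (((hpc.mul hyc).pow 2).integrableOn_Icc)
  have hp'y2I : IntervalIntegrable (fun x => p' x * (y x) ^ 2) volume a b :=
    (intervalIntegrable_iff_integrableOn_Icc_of_le hab).2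
      (contmul_int a b p' (fun x => (y x) ^ 2) hp' ((hyc.pow 2).integrableOn_Icc))
  have hQI : IntervalIntegrable (fun x => (g x - p x * y x) ^ 2) volume a b := by
    have he : (fun x => (g x - p x * y x) ^ 2)
        = fun x => ((g x) ^ 2 - 2 * p x * y x * g x) + (p x * y x) ^ 2 := by
      funext x; ring
    rw [he]
    exact (hg2I.sub hpygI).add hpy2I
  have hibp := ibp_sq hab hp hp' hT
  have hI2 : IntervalIntegrable (fun x => p' x * (y x) ^ 2 + 2 * p x * y x * g x) volume a b :=
    hp'y2I.add hpygI
  have hRI : IntervalIntegrable (fun x => (-(p' x + (p x) ^ 2 + lam)) * (y x) ^ 2) volume a b := by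
    have he : (fun x => (-(p' x + (p x) ^ 2 + lam)) * (y x) ^ 2)
        = fun x => (-(p' x * (y x) ^ 2) - (p x * y x) ^ 2) - lam * (y x) ^ 2 := by
      funext x; ring
    rw [he]
    exact (hp'y2I.neg.sub hpy2I).sub (hy2I.const_mul _)
  have key : (∫ x in a..b, ((g x) ^ 2 - lam * (y x) ^ 2))
      = ∫ x in a..b, ((g x - p x * y x) ^ 2
          + ((-(p' x + (p x) ^ 2 + lam)) * (y x) ^ 2
          + (p' x * (y x) ^ 2 + 2 * p x * y x * g x))) := by
    apply intervalIntegral.integral_congr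
    intro x _; ring
  rw [intervalIntegral.integral_add hQI (hRI.add hI2), intervalIntegral.integral_add hRI hI2]
    at key
  rw [intervalIntegral.integral_sub hg2I (hy2I.const_mul _), intervalIntegral.integral_const_mul]
    at key
  rw [hibp] at key
  linarith [key]

lemma testOne (ζ : ℝ) (hζ : ζ < 1) :
    IsTestOn ζ 1 (fun _ => (1:ℝ)) (fun _ => (0:ℝ)) ∧ (0 < ∫ x in ζ..(1:ℝ), ((1:ℝ)) ^ 2) := by
  constructor
  · refine ⟨fun x hx => by simp, ?_, ?_⟩ <;> simp [integrableOn_const]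
  · simp [hζ.le]
    linarith

lemma RSet_nonempty (k1 ζ : ℝ) (hζ : ζ < 1) : (RSet k1 ζ).Nonempty := by
  obtain ⟨hT, hD⟩ := testOne ζ hζ
  exact ⟨_, ⟨_, _, hT, hD, rfl⟩⟩

lemma rayleigh_lb {k1 ζ lam : ℝ} (hζ : ζ < 1) {p p' : ℝ → ℝ}
    (hp : ∀ x ∈ Icc ζ 1, HasDerivAt p (p' x) x) (hp' : ContinuousOn p' (Icc ζ 1))
    (hpa : p ζ ≤ -(1/2)) (hpb : -(k1 ^ 2) ≤ p 1)
    (hric : ∀ x ∈ Icc ζ 1, p' x + (p x) ^ 2 ≤ -lam) :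
    ∀ r ∈ RSet k1 ζ, lam ≤ r := by
  rintro r ⟨y, g, hT, hD, rfl⟩
  rw [le_div_iff₀ hD]
  have hs := split (lam := lam) (le_of_lt hζ) hp hp' hT
  have hQ : 0 ≤ ∫ x in ζ..(1:ℝ), (g x - p x * y x) ^ 2 :=
    intervalIntegral.integral_nonneg (le_of_lt hζ) (fun u _ => sq_nonneg _)
  have hR : 0 ≤ ∫ x in ζ..(1:ℝ), (-(p' x + (p x) ^ 2 + lam)) * (y x) ^ 2 := by
    apply intervalIntegral.integral_nonneg (le_of_lt hζ)
    intro u hu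
    have := hric u hu
    have h2 : 0 ≤ -(p' u + (p u) ^ 2 + lam) := by linarith
    positivity
  have hyζ : 0 ≤ (-(p ζ + 1/2)) * (y ζ) ^ 2 := by
    have h2 : 0 ≤ -(p ζ + 1/2) := by linarith
    positivity
  have hy1 : 0 ≤ (p 1 + k1 ^ 2) * (y 1) ^ 2 := by
    have h2 : 0 ≤ p 1 + k1 ^ 2 := by linarith
    positivity
  nlinarith [hs, hQ, hR, hyζ, hy1]

lemma mu1_ge {k1 ζ lam : ℝ} (hζ : ζ < 1) {p p' : ℝ → ℝ}
    (hp : ∀ x ∈ Icc ζ 1, HasDerivAt p (p' x) x) (hp' : ContinuousOn p' (Icc ζ 1))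
    (hpa : p ζ ≤ -(1/2)) (hpb : -(k1 ^ 2) ≤ p 1)
    (hric : ∀ x ∈ Icc ζ 1, p' x + (p x) ^ 2 ≤ -lam) :
    lam ≤ mu1 k1 ζ := by
  rw [mu1_eq_sInf]
  exact le_csInf (RSet_nonempty k1 ζ hζ) (rayleigh_lb hζ hp hp' hpa hpb hric)

lemma RSet_bddBelow (k1 ζ : ℝ) (hζ : ζ < 1) : BddBelow (RSet k1 ζ) := by
  set β : ℝ := (1/2 - k1 ^ 2) / (1 - ζ) with hβ
  set c : ℝ := 1/2 + |1/2 - k1 ^ 2| with hc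
  refine ⟨-(|β| + c ^ 2), ?_⟩
  intro r hr
  refine rayleigh_lb hζ (p := fun x => -(1/2) + (x - ζ) * β) (p' := fun _ => β)
    (fun x _ => ?_) continuousOn_const ?_ ?_ ?_ r hr
  · simpa using ((hasDerivAt_id x).sub_const ζ).mul_const β |>.const_add (-(1/2 : ℝ))
  · simp
  · have h1 : β * (1 - ζ) = 1/2 - k1 ^ 2 :=
      div_mul_cancel₀ _ (by linarith : (1:ℝ) - ζ ≠ 0)
    nlinarith [h1]
  · intro x hx
    have hx1 : ζ ≤ x := hx.1
    have hx2 : x ≤ 1 := hx.2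
    have hb : |(x - ζ) * β| ≤ |1/2 - k1 ^ 2| := by
      rw [abs_mul]
      have h1 : |x - ζ| ≤ 1 - ζ := by
        rw [abs_of_nonneg (by linarith)]; linarith
      have h2 : |β| = |1/2 - k1 ^ 2| / (1 - ζ) := by
        rw [hβ, abs_div, abs_of_pos (by linarith : (0:ℝ) < 1 - ζ)]
      rw [h2]
      rw [div_eq_inv_mul, ← mul_assoc]
      have h3 : |x - ζ| * (1 - ζ)⁻¹ ≤ 1 := by
        rw [← div_eq_mul_inv, div_le_one (by linarith)]
        exact h1
      nlinarith [abs_nonneg (1/2 - k1 ^ 2), h3]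
    have habs : |-(1/2) + (x - ζ) * β| ≤ c := by
      calc |-(1/2) + (x - ζ) * β| ≤ |(-(1/2):ℝ)| + |(x - ζ) * β| := abs_add_le _ _
        _ ≤ 1/2 + |1/2 - k1 ^ 2| := by
            rw [abs_neg, abs_of_nonneg (by norm_num : (0:ℝ) ≤ (1/2:ℝ))]
            linarith
        _ = c := hc.symm
    have hsq : (-(1/2) + (x - ζ) * β) ^ 2 ≤ c ^ 2 := by
      have h4 := pow_le_pow_left₀ (abs_nonneg (-(1/2) + (x - ζ) * β)) habs 2
      rwa [sq_abs] at h4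
    have : β ≤ |β| := le_abs_self β
    nlinarith

lemma mem_value {k1 ζ lam : ℝ} (hζ : ζ < 1) {p p' : ℝ → ℝ}
    (hp : ∀ x ∈ Icc ζ 1, HasDerivAt p (p' x) x) (hp' : ContinuousOn p' (Icc ζ 1))
    (hpa : p ζ = -(1/2))
    (hric : ∀ x ∈ Icc ζ 1, p' x + (p x) ^ 2 = -lam) :
    ∃ E D : ℝ, 0 < E ∧ 0 < D ∧ (lam + (p 1 + k1 ^ 2) * E / D) ∈ RSet k1 ζ := by
  have hpcOn : ContinuousOn p (Icc ζ 1) := fun x hx => ((hp x hx).continuousAt).continuousWithinAt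
  set clamp : ℝ → ℝ := fun t => max ζ (min 1 t) with hclampdef
  have hclampc : Continuous clamp := continuous_const.max (continuous_const.min continuous_id)
  have hclampmem : ∀ t, clamp t ∈ Icc ζ 1 := fun t => ⟨le_max_left _ _,
    max_le (le_of_lt hζ) (min_le_left _ _)⟩
  have hclampeq : ∀ t ∈ Icc ζ 1, clamp t = t := by
    intro t ht
    rw [hclampdef]
    simp only [min_eq_right ht.2, max_eq_right ht.1]
  set pc : ℝ → ℝ := fun t => p (clamp t) with hpcdef
  have hpcc : Continuous pc := hpcOn.comp_continuous hclampc hclampmem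
  set F : ℝ → ℝ := fun x => ∫ t in ζ..x, pc t with hFdef
  have hFder : ∀ x, HasDerivAt F (pc x) x := by
    intro x
    exact intervalIntegral.integral_hasDerivAt_right (hpcc.intervalIntegrable ζ x)
      (hpcc.stronglyMeasurable.stronglyMeasurableAtFilter) hpcc.continuousAt
  set y : ℝ → ℝ := fun x => Real.exp (F x) with hydef
  set g : ℝ → ℝ := fun x => pc x * y x with hgdef
  have hyder : ∀ x, HasDerivAt y (g x) x := by
    intro x
    have := (hFder x).exp
    simpa [hydef, hgdef, mul_comm] using this
  have hFc : Continuous F := continuous_iff_continuousAt.2 (fun x => (hFder x).continuousAt)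
  have hyc : Continuous y := Real.continuous_exp.comp hFc
  have hgc : Continuous g := hpcc.mul hyc
  have hT : IsTestOn ζ 1 y g := by
    refine ⟨?_, hgc.integrableOn_Icc, (hgc.pow 2).integrableOn_Icc⟩
    intro x hx
    have h1 : (∫ t in ζ..x, g t) = y x - y ζ :=
      intervalIntegral.integral_eq_sub_of_hasDerivAt (fun t _ => hyder t)
        (hgc.intervalIntegrable ζ x)
    rw [h1]; ring
  have hy2I : IntervalIntegrable (fun x => (y x) ^ 2) volume ζ 1 :=
    ((hyc.pow 2)).intervalIntegrable ζ 1
  have hD : 0 < ∫ x in ζ..(1:ℝ), (y x) ^ 2 := by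
    apply intervalIntegral.intervalIntegral_pos_of_pos_on hy2I _ hζ
    intro x _
    positivity
  have hs := split (lam := lam) (le_of_lt hζ) hp hp' hT
  have hQ0 : (∫ x in ζ..(1:ℝ), (g x - p x * y x) ^ 2) = 0 := by
    rw [show (0:ℝ) = ∫ x in ζ..(1:ℝ), (0:ℝ) by simp]
    apply intervalIntegral.integral_congr
    intro x hx
    rw [uIcc_of_le (le_of_lt hζ)] at hx
    show (g x - p x * y x) ^ 2 = 0
    rw [hgdef]
    simp only []
    rw [hpcdef]
    simp only []
    rw [hclampeq x hx]
    ring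
  have hR0 : (∫ x in ζ..(1:ℝ), (-(p' x + (p x) ^ 2 + lam)) * (y x) ^ 2) = 0 := by
    rw [show (0:ℝ) = ∫ x in ζ..(1:ℝ), (0:ℝ) by simp]
    apply intervalIntegral.integral_congr
    intro x hx
    rw [uIcc_of_le (le_of_lt hζ)] at hx
    show (-(p' x + (p x) ^ 2 + lam)) * (y x) ^ 2 = 0
    rw [hric x hx]
    ring
  rw [hQ0, hR0, hpa] at hs
  -- hs : ∫g² − lam∫y² = 0 + 0 + (p 1 * y1² − (−1/2) * yζ²)
  refine ⟨(y 1) ^ 2, (∫ x in ζ..(1:ℝ), (y x) ^ 2), by positivity, hD, ?_⟩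
  refine ⟨y, g, hT, hD, ?_⟩
  rw [eq_div_iff (ne_of_gt hD)]
  field_simp at hs ⊢
  nlinarith [hs]

noncomputable def Afun (k1 lam u : ℝ) : ℝ := ∫ v in u..k1^2, (lam + v^2)⁻¹

section Acontext
variable {k1 lam : ℝ} (hk : 1/2 < k1^2) (hlam : -(1/4) < lam)

lemma sqrt_lt_half (hlam : -(1/4) < lam) : Real.sqrt (max (-lam) 0) < 1/2 := by
  rw [show (1/2 : ℝ) = Real.sqrt (1/4) by
    rw [show (1/4 : ℝ) = (1/2)^2 by norm_num, Real.sqrt_sq (by norm_num)]]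
  apply Real.sqrt_lt_sqrt (le_max_right _ _)
  rw [max_lt_iff]
  constructor <;> [linarith; norm_num]

lemma fA_pos (hlam : -(1/4) < lam) {v : ℝ} (hv : Real.sqrt (max (-lam) 0) < v) :
    0 < lam + v^2 := by
  set s := Real.sqrt (max (-lam) 0) with hs
  have hs0 : 0 ≤ s := Real.sqrt_nonneg _
  have hs2 : s^2 = max (-lam) 0 := Real.sq_sqrt (le_max_right _ _)
  have h1 : s^2 < v^2 := by nlinarith
  have h2 : -lam ≤ s^2 := hs2 ▸ le_max_left _ _
  nlinarith

lemma fA_contAt (hlam : -(1/4) < lam) {v : ℝ} (hv : Real.sqrt (max (-lam) 0) < v) :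
    ContinuousAt (fun w => (lam + w^2)⁻¹) v := by
  exact (continuousAt_const.add ((continuous_pow 2).continuousAt)).inv₀
    (ne_of_gt (fA_pos hlam hv))

lemma fA_intable (hlam : -(1/4) < lam) {u₁ u₂ : ℝ}
    (h1 : Real.sqrt (max (-lam) 0) < u₁) (h2 : Real.sqrt (max (-lam) 0) < u₂) :
    IntervalIntegrable (fun w => (lam + w^2)⁻¹) volume u₁ u₂ := by
  apply ContinuousOn.intervalIntegrable
  intro v hv
  rw [uIcc] at hv
  have : Real.sqrt (max (-lam) 0) < v := lt_of_lt_of_le (lt_min h1 h2) hv.1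
  exact (fA_contAt hlam this).continuousWithinAt

lemma Afun_hasDeriv (hk : 1/2 < k1^2) (hlam : -(1/4) < lam) {u : ℝ}
    (hu : Real.sqrt (max (-lam) 0) < u) :
    HasDerivAt (Afun k1 lam) (-(lam + u^2)⁻¹) u := by
  have hks : Real.sqrt (max (-lam) 0) < k1^2 := lt_trans (sqrt_lt_half hlam) (by linarith)
  exact intervalIntegral.integral_hasDerivAt_left (fA_intable hlam hu hks)
    ((((measurable_const.add (measurable_id.pow_const 2)).inv).stronglyMeasurable).stronglyMeasurableAtFilter)
    (fA_contAt hlam hu)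

lemma Afun_split (hk : 1/2 < k1^2) (hlam : -(1/4) < lam) {u₁ u₂ : ℝ}
    (h1 : Real.sqrt (max (-lam) 0) < u₁) (h2 : Real.sqrt (max (-lam) 0) < u₂) :
    Afun k1 lam u₁ = (∫ v in u₁..u₂, (lam + v^2)⁻¹) + Afun k1 lam u₂ := by
  have hks : Real.sqrt (max (-lam) 0) < k1^2 := lt_trans (sqrt_lt_half hlam) (by linarith)
  rw [Afun, Afun]
  rw [← intervalIntegral.integral_add_adjacent_intervals (fA_intable hlam h1 h2)
    (fA_intable hlam h2 hks)]

lemma Afun_strictAnti (hk : 1/2 < k1^2) (hlam : -(1/4) < lam) {u₁ u₂ : ℝ}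
    (h1 : Real.sqrt (max (-lam) 0) < u₁) (hlt : u₁ < u₂) :
    Afun k1 lam u₂ < Afun k1 lam u₁ := by
  have h2 : Real.sqrt (max (-lam) 0) < u₂ := lt_trans h1 hlt
  rw [Afun_split hk hlam h1 h2]
  have hpos : 0 < ∫ v in u₁..u₂, (lam + v^2)⁻¹ := by
    apply intervalIntegral.intervalIntegral_pos_of_pos_on (fA_intable hlam h1 h2)
    · intro x hx
      exact inv_pos.2 (fA_pos hlam (lt_trans h1 hx.1))
    · exact hlt
  linarith

lemma Afun_self (k1 lam : ℝ) : Afun k1 lam (k1^2) = 0 := intervalIntegral.integral_same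

end Acontext

section Inverse
variable {k1 lam ζ : ℝ}

-- the inverse function of `Afun k1 lam` on `[uℓ, k1²+1]`
open Classical in
noncomputable def rfun (k1 lam : ℝ) : ℝ → ℝ := fun t =>
  if h : ∃ u ∈ Icc ((Real.sqrt (max (-lam) 0) + 1/2)/2) (k1^2 + 1), Afun k1 lam u = t
  then h.choose else 0

lemma rfun_spec (hk : 1/2 < k1^2) (hlam : -(1/4) < lam) {t : ℝ}
    (ht : t ∈ Icc (Afun k1 lam (k1^2+1)) (Afun k1 lam ((Real.sqrt (max (-lam) 0) + 1/2)/2))) :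
    rfun k1 lam t ∈ Icc ((Real.sqrt (max (-lam) 0) + 1/2)/2) (k1^2 + 1)
      ∧ Afun k1 lam (rfun k1 lam t) = t := by
  set s := Real.sqrt (max (-lam) 0) with hs
  have hs12 : s < 1/2 := sqrt_lt_half hlam
  have hul : (s + 1/2)/2 ≤ k1^2 + 1 := by nlinarith [Real.sqrt_nonneg (max (-lam) 0)]
  have hcont : ContinuousOn (Afun k1 lam) (Icc ((s + 1/2)/2) (k1^2+1)) := by
    intro u hu
    have hsu : s < u := lt_of_lt_of_le (by nlinarith [Real.sqrt_nonneg (max (-lam) 0)]) hu.1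
    exact (Afun_hasDeriv hk hlam hsu).continuousAt.continuousWithinAt
  have hIVT := intermediate_value_Icc' hul hcont ht
  obtain ⟨u, hu, hAu⟩ := hIVT
  have hex : ∃ u ∈ Icc ((s + 1/2)/2) (k1^2 + 1), Afun k1 lam u = t := ⟨u, hu, hAu⟩
  rw [rfun]
  rw [dif_pos hex]
  exact ⟨hex.choose_spec.1, hex.choose_spec.2⟩

lemma uell_gt (hlam : -(1/4) < lam) :
    Real.sqrt (max (-lam) 0) < (Real.sqrt (max (-lam) 0) + 1/2)/2 := by
  have := sqrt_lt_half hlam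
  have := Real.sqrt_nonneg (max (-lam) 0)
  linarith

lemma uell_lt_half (hlam : -(1/4) < lam) :
    (Real.sqrt (max (-lam) 0) + 1/2)/2 < 1/2 := by
  have := sqrt_lt_half hlam
  linarith

-- key range facts given `Afun k1 lam (1/2) = L` and `t ∈ [0, L]`
lemma rfun_range (hk : 1/2 < k1^2) (hlam : -(1/4) < lam) {L t : ℝ}
    (hL : Afun k1 lam (1/2) = L) (ht : t ∈ Icc 0 L) :
    rfun k1 lam t ∈ Icc (1/2 : ℝ) (k1^2) ∧ Afun k1 lam (rfun k1 lam t) = t := by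
  set s := Real.sqrt (max (-lam) 0) with hs
  have hs12 : s < 1/2 := sqrt_lt_half hlam
  have hsk : s < k1^2 := by linarith
  have huls : s < (s + 1/2)/2 := uell_gt hlam
  have hul12 : (s + 1/2)/2 < 1/2 := uell_lt_half hlam
  have htop : Afun k1 lam (k1^2+1) < 0 := by
    have := Afun_strictAnti hk hlam hsk (by linarith : k1^2 < k1^2 + 1)
    rw [Afun_self] at this
    linarith
  have hub : L < Afun k1 lam ((s + 1/2)/2) := by
    have := Afun_strictAnti hk hlam huls hul12
    rw [hL] at this
    linarith
  have hmem : t ∈ Icc (Afun k1 lam (k1^2+1)) (Afun k1 lam ((s + 1/2)/2)) :=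
    ⟨le_trans (le_of_lt htop) ht.1, le_trans ht.2 (le_of_lt hub)⟩
  obtain ⟨hr1, hr2⟩ := rfun_spec hk hlam hmem
  refine ⟨⟨?_, ?_⟩, hr2⟩
  · by_contra h
    push_neg at h
    have : Afun k1 lam (1/2) < Afun k1 lam (rfun k1 lam t) := by
      apply Afun_strictAnti hk hlam (lt_of_lt_of_le huls hr1.1) h
    rw [hL, hr2] at this
    linarith [ht.2]
  · by_contra h
    push_neg at h
    have : Afun k1 lam (rfun k1 lam t) < Afun k1 lam (k1^2) :=
      Afun_strictAnti hk hlam hsk h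
    rw [Afun_self, hr2] at this
    linarith [ht.1]

lemma rfun_contAt (hk : 1/2 < k1^2) (hlam : -(1/4) < lam) {L t₀ : ℝ}
    (hL : Afun k1 lam (1/2) = L) (ht₀ : t₀ ∈ Icc 0 L) :
    ContinuousAt (rfun k1 lam) t₀ := by
  set s := Real.sqrt (max (-lam) 0) with hs
  have hs12 : s < 1/2 := sqrt_lt_half hlam
  have hsk : s < k1^2 := by linarith
  have huls : s < (s + 1/2)/2 := uell_gt hlam
  have hul12 : (s + 1/2)/2 < 1/2 := uell_lt_half hlam
  obtain ⟨hu₀itv, hu₀val⟩ := rfun_range hk hlam hL ht₀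
  set u₀ := rfun k1 lam t₀ with hu₀
  rw [Metric.continuousAt_iff]
  intro ε hε
  set e : ℝ := min ε (min (u₀ - (s + 1/2)/2) ((k1^2 + 1) - u₀)) / 2 with he
  have he1 : 0 < u₀ - (s + 1/2)/2 := by
    have := hu₀itv.1; simp only [sub_pos]; linarith
  have he2 : 0 < (k1^2 + 1) - u₀ := by
    have := hu₀itv.2; linarith
  have hepos : 0 < e := by
    rw [he]; positivity
  have heε : e < ε := by
    rw [he]
    have h1 : min ε (min (u₀ - (s + 1/2)/2) ((k1^2 + 1) - u₀)) ≤ ε := min_le_left _ _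
    linarith
  have hlo : (s + 1/2)/2 ≤ u₀ - e := by
    have h1 : min ε (min (u₀ - (s + 1/2)/2) ((k1^2 + 1) - u₀)) ≤ u₀ - (s + 1/2)/2 :=
      le_trans (min_le_right _ _) (min_le_left _ _)
    rw [he]; linarith
  have hhi : u₀ + e ≤ k1^2 + 1 := by
    have h1 : min ε (min (u₀ - (s + 1/2)/2) ((k1^2 + 1) - u₀)) ≤ (k1^2 + 1) - u₀ :=
      le_trans (min_le_right _ _) (min_le_right _ _)
    rw [he]; linarith
  have hsu₀e : s < u₀ - e := lt_of_lt_of_le huls hlo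
  have hA1 : t₀ < Afun k1 lam (u₀ - e) := by
    have := Afun_strictAnti hk hlam hsu₀e (by linarith : u₀ - e < u₀)
    rwa [hu₀val] at this
  have hA2 : Afun k1 lam (u₀ + e) < t₀ := by
    have := Afun_strictAnti hk hlam (by linarith : s < u₀) (by linarith : u₀ < u₀ + e)
    rwa [hu₀val] at this
  refine ⟨min (Afun k1 lam (u₀ - e) - t₀) (t₀ - Afun k1 lam (u₀ + e)), by
    apply lt_min <;> linarith, ?_⟩
  intro t hdist
  rw [Real.dist_eq] at hdist
  have hd1 : |t - t₀| < Afun k1 lam (u₀ - e) - t₀ := lt_of_lt_of_le hdist (min_le_left _ _)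
  have hd2 : |t - t₀| < t₀ - Afun k1 lam (u₀ + e) := lt_of_lt_of_le hdist (min_le_right _ _)
  have htlo : Afun k1 lam (u₀ + e) < t := by
    have := neg_abs_le (t - t₀); linarith
  have hthi : t < Afun k1 lam (u₀ - e) := by
    have := le_abs_self (t - t₀); linarith
  -- t is in the valid range of rfun
  have hmono_le : ∀ u₁ u₂, s < u₁ → u₁ ≤ u₂ → Afun k1 lam u₂ ≤ Afun k1 lam u₁ := by
    intro u₁ u₂ h1 h12
    rcases eq_or_lt_of_le h12 with rfl | h
    · exact le_refl _
    · exact le_of_lt (Afun_strictAnti hk hlam h1 h)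
  have hmemt : t ∈ Icc (Afun k1 lam (k1^2+1)) (Afun k1 lam ((s + 1/2)/2)) := by
    constructor
    · exact le_trans (hmono_le _ _ (by linarith : s < u₀ + e) hhi) (le_of_lt htlo)
    · exact le_trans (le_of_lt hthi) (hmono_le _ _ huls hlo)
  obtain ⟨hrt_itv, hrt_val⟩ := rfun_spec hk hlam hmemt
  have hrle : rfun k1 lam t ≤ u₀ + e := by
    by_contra h
    push_neg at h
    have := Afun_strictAnti hk hlam (by linarith : s < u₀ + e) h
    rw [hrt_val] at this
    linarith
  have hrge : u₀ - e ≤ rfun k1 lam t := by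
    by_contra h
    push_neg at h
    have := Afun_strictAnti hk hlam (lt_of_lt_of_le huls hrt_itv.1) h
    rw [hrt_val] at this
    linarith
  rw [Real.dist_eq, ← hu₀]
  rw [abs_sub_lt_iff]
  constructor <;> linarith

lemma rfun_hasDeriv (hk : 1/2 < k1^2) (hlam : -(1/4) < lam) {L t₀ : ℝ}
    (hL : Afun k1 lam (1/2) = L) (ht₀ : t₀ ∈ Icc 0 L) :
    HasDerivAt (rfun k1 lam) (-(lam + (rfun k1 lam t₀)^2)) t₀ := by
  set s := Real.sqrt (max (-lam) 0) with hs
  have hs12 : s < 1/2 := sqrt_lt_half hlam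
  have hsk : s < k1^2 := by linarith
  have huls : s < (s + 1/2)/2 := uell_gt hlam
  have hul12 : (s + 1/2)/2 < 1/2 := uell_lt_half hlam
  obtain ⟨hu₀itv, hu₀val⟩ := rfun_range hk hlam hL ht₀
  have hsu₀ : s < rfun k1 lam t₀ := lt_of_lt_of_le (by linarith) hu₀itv.1
  have hAd := Afun_hasDeriv hk hlam hsu₀
  have hne : -(lam + (rfun k1 lam t₀)^2)⁻¹ ≠ 0 := by
    have := fA_pos hlam hsu₀
    simp only [ne_eq, neg_eq_zero, inv_eq_zero]
    linarith
  have htop : Afun k1 lam (k1^2+1) < 0 := by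
    have := Afun_strictAnti hk hlam hsk (by linarith : k1^2 < k1^2 + 1)
    rw [Afun_self] at this
    linarith
  have hub : L < Afun k1 lam ((s + 1/2)/2) := by
    have := Afun_strictAnti hk hlam huls hul12
    rw [hL] at this
    linarith
  have hfg : ∀ᶠ t in nhds t₀, Afun k1 lam (rfun k1 lam t) = t := by
    have hopen : Ioo (Afun k1 lam (k1^2+1)) (Afun k1 lam ((s + 1/2)/2)) ∈ nhds t₀ := by
      apply Ioo_mem_nhds
      · linarith [ht₀.1]
      · linarith [ht₀.2]
    filter_upwards [hopen] with t ht
    exact (rfun_spec hk hlam ⟨le_of_lt ht.1, le_of_lt ht.2⟩).2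
  have := HasDerivAt.of_local_left_inverse (rfun_contAt hk hlam hL ht₀) hAd hne hfg
  have heq : (-(lam + (rfun k1 lam t₀)^2)⁻¹)⁻¹ = -(lam + (rfun k1 lam t₀)^2) := by
    rw [← inv_neg, inv_inv]
  rwa [heq] at this

end Inverse

section Main
variable {k1 lam ζ : ℝ}

lemma rfun_at_L {k1 lam : ℝ} (hk : 1/2 < k1^2) (hlam : -(1/4) < lam) {L : ℝ}
    (hL : Afun k1 lam (1/2) = L) (hL0 : 0 ≤ L) : rfun k1 lam L = 1/2 := by
  obtain ⟨hitv, hval⟩ := rfun_range hk hlam hL (⟨hL0, le_refl L⟩)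
  rcases eq_or_lt_of_le hitv.1 with h | h
  · exact h.symm
  · exfalso
    have := Afun_strictAnti hk hlam (sqrt_lt_half hlam) h
    rw [hval, hL] at this
    linarith

lemma rfun_at_0 {k1 lam : ℝ} (hk : 1/2 < k1^2) (hlam : -(1/4) < lam) {L : ℝ}
    (hL : Afun k1 lam (1/2) = L) (hL0 : 0 ≤ L) : rfun k1 lam 0 = k1^2 := by
  obtain ⟨hitv, hval⟩ := rfun_range hk hlam hL (⟨le_refl 0, hL0⟩)
  rcases eq_or_lt_of_le hitv.2 with h | h
  · exact h
  · exfalso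
    have hs : Real.sqrt (max (-lam) 0) < rfun k1 lam 0 :=
      lt_of_lt_of_le (sqrt_lt_half hlam) hitv.1
    have := Afun_strictAnti hk hlam hs h
    rw [hval, Afun_self] at this
    linarith

lemma mu1_eq_lam (hk : 1/2 < k1^2) (hζ0 : 0 ≤ ζ) (hζ : ζ < 1) (hlam : -(1/4) < lam)
    (hS : Afun k1 lam (1/2) = 1 - ζ) : mu1 k1 ζ = lam := by
  set L : ℝ := 1 - ζ with hLdef
  have hL0 : 0 ≤ L := by linarith
  set p : ℝ → ℝ := fun x => -(rfun k1 lam (1 - x)) with hpdef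
  set p' : ℝ → ℝ := fun x => -(lam + (rfun k1 lam (1 - x))^2) with hp'def
  have hmemIcc : ∀ x ∈ Icc ζ (1:ℝ), (1 - x) ∈ Icc 0 L := by
    intro x hx
    exact ⟨by linarith [hx.2], by rw [hLdef]; linarith [hx.1]⟩
  have hp : ∀ x ∈ Icc ζ (1:ℝ), HasDerivAt p (p' x) x := by
    intro x hx
    have hr := rfun_hasDeriv hk hlam hS (hmemIcc x hx)
    have hinner : HasDerivAt (fun w : ℝ => 1 - w) (-1) x := by
      have h := (hasDerivAt_const x (1:ℝ)).sub (hasDerivAt_id' x)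
      rwa [zero_sub] at h
    have hcomp := HasDerivAt.comp x hr hinner
    have := hcomp.neg
    convert this using 1
    · exact rfl
    · exact rfl
    · exact rfl
    rw [hp'def]
    simp only [Function.comp]
    ring
  have hp' : ContinuousOn p' (Icc ζ 1) := by
    intro x hx
    have hc : ContinuousAt (fun w : ℝ => rfun k1 lam (1 - w)) x := by
      apply ContinuousAt.comp (rfun_contAt hk hlam hS (hmemIcc x hx))
      exact (continuous_const.sub continuous_id).continuousAt
    exact ((continuousAt_const.add (hc.pow 2)).neg).continuousWithinAt
  have hpζ : p ζ = -(1/2) := by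
    rw [hpdef]
    simp only []
    rw [show (1:ℝ) - ζ = L by rw [hLdef], rfun_at_L hk hlam hS hL0]
  have hp1 : p 1 = -(k1^2) := by
    rw [hpdef]
    simp only []
    rw [show (1:ℝ) - 1 = 0 by ring, rfun_at_0 hk hlam hS hL0]
  have hric : ∀ x ∈ Icc ζ (1:ℝ), p' x + (p x) ^ 2 = -lam := by
    intro x hx
    rw [hpdef, hp'def]
    simp only []
    ring
  apply le_antisymm
  · obtain ⟨E, D, hE, hD, hmem⟩ := mem_value hζ hp hp' hpζ hric
    rw [hp1] at hmem
    have : lam + (-(k1^2) + k1 ^ 2) * E / D = lam := by ring_nf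
    rw [this] at hmem
    rw [mu1_eq_sInf]
    exact csInf_le (RSet_bddBelow k1 ζ hζ) hmem
  · exact mu1_ge hζ hp hp' (le_of_eq hpζ) (by rw [hp1]) (fun x hx => le_of_eq (hric x hx))

end Main

section S
variable {k1 : ℝ}

lemma half_gt_sqrt {lam : ℝ} (hlam : -(1/4) < lam) {v : ℝ} (hv : (1/2:ℝ) ≤ v) :
    Real.sqrt (max (-lam) 0) < v := lt_of_lt_of_le (sqrt_lt_half hlam) hv

lemma S_pos (hk : 1/2 < k1^2) {lam : ℝ} (hlam : -(1/4) < lam) : 0 < Afun k1 lam (1/2) := by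
  have := Afun_strictAnti (k1 := k1) (u₁ := 1/2) (u₂ := k1^2) hk hlam
    (half_gt_sqrt hlam (le_refl _)) (by linarith)
  rwa [Afun_self] at this

lemma S_anti (hk : 1/2 < k1^2) {l1 l2 : ℝ} (h1 : -(1/4) < l1) (hle : l1 ≤ l2) :
    Afun k1 l2 (1/2) ≤ Afun k1 l1 (1/2) := by
  have h2 : -(1/4) < l2 := lt_of_lt_of_le h1 hle
  rw [Afun, Afun]
  apply intervalIntegral.integral_mono_on (by linarith)
    (fA_intable h2 (half_gt_sqrt h2 (le_refl _)) (half_gt_sqrt h2 (by linarith)))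
    (fA_intable h1 (half_gt_sqrt h1 (le_refl _)) (half_gt_sqrt h1 (by linarith)))
  intro v hv
  have hv2 : 0 < l1 + v^2 := fA_pos h1 (half_gt_sqrt h1 hv.1)
  apply inv_anti₀ hv2
  linarith

lemma S_le (hk : 1/2 < k1^2) {lam : ℝ} (hlam : -(1/4) < lam) :
    Afun k1 lam (1/2) ≤ (k1^2 - 1/2) * (lam + 1/4)⁻¹ := by
  have hq : 0 < lam + 1/4 := by linarith
  rw [Afun]
  have h1 : (∫ v in (1/2:ℝ)..k1^2, (lam + v^2)⁻¹)
      ≤ ∫ _ in (1/2:ℝ)..k1^2, (lam + 1/4)⁻¹ := by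
    apply intervalIntegral.integral_mono_on (by linarith)
      (fA_intable hlam (half_gt_sqrt hlam (le_refl _)) (half_gt_sqrt hlam (by linarith)))
      intervalIntegrable_const
    intro v hv
    apply inv_anti₀ hq
    nlinarith [hv.1]
  calc (∫ v in (1/2:ℝ)..k1^2, (lam + v^2)⁻¹) ≤ ∫ _ in (1/2:ℝ)..k1^2, (lam + 1/4)⁻¹ := h1
    _ = (k1^2 - 1/2) * (lam + 1/4)⁻¹ := by
        rw [intervalIntegral.integral_const, smul_eq_mul]

-- lower bound for S near -1/4
lemma S_ge_log (hk : 1/2 < k1^2) {ε : ℝ} (hε0 : 0 < ε) (hε1 : ε ≤ 1/8) :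
    (1/2) * Real.log ((2 * min (k1^2) (3/2) - 1 + ε)/ε) ≤ Afun k1 (-(1/4) + ε) (1/2) := by
  set lam : ℝ := -(1/4) + ε with hlamdef
  have hlam : -(1/4) < lam := by rw [hlamdef]; linarith
  set u : ℝ := min (k1^2) (3/2) with hudef
  have hu12 : 1/2 < u := by rw [hudef]; exact lt_min hk (by norm_num)
  have huk : u ≤ k1^2 := min_le_left _ _
  have hu32 : u ≤ 3/2 := min_le_right _ _
  have hsplit := Afun_split (u₂ := u) hk hlam (half_gt_sqrt hlam (le_refl _))
    (half_gt_sqrt hlam (le_of_lt hu12))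
  have htail : 0 ≤ Afun k1 lam u := by
    rcases eq_or_lt_of_le huk with h | h
    · rw [h, Afun_self]
    · have := Afun_strictAnti hk hlam (half_gt_sqrt hlam (le_of_lt hu12)) h
      rw [Afun_self] at this
      linarith
  have hcmp : (∫ v in (1/2:ℝ)..u, (2*v + (ε-1))⁻¹) ≤ ∫ v in (1/2:ℝ)..u, (lam + v^2)⁻¹ := by
    apply intervalIntegral.integral_mono_on (le_of_lt hu12)
    · apply ContinuousOn.intervalIntegrable
      intro v hv
      rw [uIcc_of_le (le_of_lt hu12)] at hv
      have hd : 0 < 2*v + (ε-1) := by nlinarith [hv.1]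
      exact ((continuous_const.mul continuous_id).add continuous_const).continuousAt.continuousWithinAt.inv₀ (ne_of_gt hd)
    · exact fA_intable hlam (half_gt_sqrt hlam (le_refl _)) (half_gt_sqrt hlam (le_of_lt hu12))
    · intro v hv
      have hd : 0 < lam + v^2 := fA_pos hlam (half_gt_sqrt hlam hv.1)
      apply inv_anti₀ hd
      rw [hlamdef]
      nlinarith [hv.1, hv.2, le_trans hv.2 hu32]
  have hcalc : (∫ v in (1/2:ℝ)..u, (2*v + (ε-1))⁻¹)
      = (1/2) * Real.log ((2*u - 1 + ε)/ε) := by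
    have h2 : (2:ℝ) ≠ 0 := by norm_num
    have hcm := mul_integral_comp_mul_add (a := (1/2:ℝ)) (b := u)
      (f := fun x => x⁻¹) (c := (2:ℝ)) (d := ε - 1)
    -- hcm : 2 * ∫ x in 1/2..u, (2*x + (ε-1))⁻¹ = ∫ x in (2*(1/2)+(ε-1))..(2*u+(ε-1)), x⁻¹
    have hlow : (2:ℝ) * (1/2) + (ε - 1) = ε := by ring
    have hhigh : (2:ℝ) * u + (ε - 1) = 2*u - 1 + ε := by ring
    rw [hlow, hhigh] at hcm
    have hint : (∫ x in ε..(2*u - 1 + ε), x⁻¹) = Real.log ((2*u - 1 + ε)/ε) := by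
      apply integral_inv
      rw [uIcc_of_le (by nlinarith)]
      intro hmem
      exact absurd hmem.1 (by linarith)
    rw [hint] at hcm
    linarith [hcm]
  calc (1/2) * Real.log ((2*u - 1 + ε)/ε)
      = ∫ v in (1/2:ℝ)..u, (2*v + (ε-1))⁻¹ := hcalc.symm
    _ ≤ ∫ v in (1/2:ℝ)..u, (lam + v^2)⁻¹ := hcmp
    _ ≤ Afun k1 lam (1/2) := by rw [hsplit]; linarith

-- continuity of S on (-(1/4), ∞)
lemma S_contOn (hk : 1/2 < k1^2) :
    ContinuousOn (fun l => Afun k1 l (1/2)) (Ioi (-(1/4):ℝ)) := by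
  set clampv : ℝ → ℝ := fun v => max (1/2) (min (k1^2) v) with hclampdef
  have hclampc : Continuous clampv := continuous_const.max (continuous_const.min continuous_id)
  have hclamp_ge : ∀ v, (1/2:ℝ) ≤ clampv v := fun v => le_max_left _ _
  have hcong : ∀ l ∈ Ioi (-(1/4):ℝ),
      Afun k1 l (1/2) = ∫ v in (1/2:ℝ)..k1^2, (l + (clampv v)^2)⁻¹ := by
    intro l hl
    rw [Afun]
    apply intervalIntegral.integral_congr
    intro v hv
    rw [uIcc_of_le (by linarith)] at hv
    rw [hclampdef]
    simp only []
    rw [min_eq_right hv.2, max_eq_right hv.1]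
  have hGc : Continuous (Function.uncurry
      (fun (q : ↥(Ioi (-(1/4):ℝ))) (v : ℝ) => ((q : ℝ) + (clampv v)^2)⁻¹)) := by
    apply Continuous.inv₀
    · exact (continuous_subtype_val.comp continuous_fst).add
        (((hclampc.comp continuous_snd).pow 2))
    · rintro ⟨q, v⟩
      have hq : -(1/4) < (q : ℝ) := q.2
      have := hclamp_ge v
      simp only [Function.uncurry]
      nlinarith
  have hΦ : Continuous (fun (q : ↥(Ioi (-(1/4):ℝ))) =>
      ∫ v in (1/2:ℝ)..k1^2, ((q : ℝ) + (clampv v)^2)⁻¹) :=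
    intervalIntegral.continuous_parametric_intervalIntegral_of_continuous' hGc _ _
  rw [continuousOn_iff_continuous_restrict]
  have : (Ioi (-(1/4):ℝ)).restrict (fun l => Afun k1 l (1/2))
      = fun (q : ↥(Ioi (-(1/4):ℝ))) => ∫ v in (1/2:ℝ)..k1^2, ((q : ℝ) + (clampv v)^2)⁻¹ := by
    funext q
    exact hcong q q.2
  change Continuous ((Ioi (-(1/4):ℝ)).restrict (fun l => Afun k1 l (1/2)))
  rw [this]
  exact hΦ

lemma S_exists (hk : 1/2 < k1^2) {L : ℝ} (hL0 : 0 < L) :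
    ∃ lam, -(1/4) < lam ∧ Afun k1 lam (1/2) = L := by
  set u : ℝ := min (k1^2) (3/2) with hudef
  have hu12 : 1/2 < u := lt_min hk (by norm_num)
  have hexp : 1 < Real.exp (2*L) := by
    rw [← Real.exp_zero]
    exact Real.exp_lt_exp.2 (by linarith)
  set ε : ℝ := min (1/8) ((2*u - 1)/(Real.exp (2*L) - 1)) with hεdef
  have hε0 : 0 < ε := by
    apply lt_min (by norm_num)
    apply div_pos (by linarith) (by linarith)
  have hε1 : ε ≤ 1/8 := min_le_left _ _
  set lamlo : ℝ := -(1/4) + ε with hlamlodef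
  set lamhi : ℝ := max 0 ((k1^2 - 1/2)/L) with hlamhidef
  have hlamlo : -(1/4) < lamlo := by rw [hlamlodef]; linarith
  have hlamhi0 : 0 ≤ lamhi := le_max_left _ _
  have hlohi : lamlo ≤ lamhi := by
    rw [hlamlodef]
    have : ε ≤ 1/8 := hε1
    calc -(1/4) + ε ≤ -(1/4) + 1/8 := by linarith
      _ ≤ 0 := by norm_num
      _ ≤ lamhi := hlamhi0
  -- S lamlo ≥ L
  have hSlo : L ≤ Afun k1 lamlo (1/2) := by
    have hlog := S_ge_log hk hε0 hε1
    rw [← hudef] at hlog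
    have harg : Real.exp (2*L) ≤ (2*u - 1 + ε)/ε := by
      rw [le_div_iff₀ hε0]
      have hε2 : ε * (Real.exp (2*L) - 1) ≤ 2*u - 1 := by
        have h1 : ε ≤ (2*u - 1)/(Real.exp (2*L) - 1) := min_le_right _ _
        rw [le_div_iff₀ (by linarith)] at h1
        linarith
      nlinarith
    have hlog2 : 2*L ≤ Real.log ((2*u - 1 + ε)/ε) := by
      rw [Real.le_log_iff_exp_le]
      · exact harg
      · apply div_pos (by nlinarith) hε0
    have : L ≤ (1/2) * Real.log ((2*u - 1 + ε)/ε) := by linarith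
    linarith [hlog]
  -- S lamhi < L
  have hShi : Afun k1 lamhi (1/2) < L := by
    have h1 := S_le hk (lt_of_lt_of_le hlamlo hlohi)
    have h2 : (k1^2 - 1/2) * (lamhi + 1/4)⁻¹ < L := by
      rw [mul_inv_lt_iff₀' (by linarith)]
      have h3 : (k1^2 - 1/2)/L ≤ lamhi := le_max_right _ _
      rw [div_le_iff₀ hL0] at h3
      nlinarith
    linarith
  -- IVT
  have hsub : Icc lamlo lamhi ⊆ Ioi (-(1/4):ℝ) := by
    intro l hl
    exact lt_of_lt_of_le hlamlo hl.1
  have hcont : ContinuousOn (fun l => Afun k1 l (1/2)) (Icc lamlo lamhi) :=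
    (S_contOn hk).mono hsub
  have hIVT := intermediate_value_Icc' hlohi hcont
    (⟨le_of_lt hShi, hSlo⟩ : L ∈ Icc (Afun k1 lamhi (1/2)) (Afun k1 lamlo (1/2)))
  obtain ⟨lam, hlam_mem, hlam_eq⟩ := hIVT
  exact ⟨lam, lt_of_lt_of_le hlamlo hlam_mem.1, hlam_eq⟩

end S

theorem stmt17 (k1 : ℝ) (hk1 : 0 ≤ k1) :
    (k1 ^ 2 = 1 / 2 → ∀ ζ ∈ Ico (0:ℝ) 1, mu1 k1 ζ = -(1 / 4)) ∧
    (k1 ^ 2 > 1 / 2 →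
      StrictMonoOn (mu1 k1) (Ico (0:ℝ) 1) ∧
      Tendsto (mu1 k1) (nhdsWithin 1 (Ico (0:ℝ) 1)) atTop ∧
      -(1 / 4) < mu1 k1 0) ∧
    (k1 ^ 2 < 1 / 2 → ∀ ζ ∈ Ico (0:ℝ) 1, mu1 k1 ζ < -(1 / 4)) := by
  have hconst : ∀ ζ : ℝ, ∀ x ∈ Icc ζ (1:ℝ),
      HasDerivAt (fun _ : ℝ => -(1/2:ℝ)) ((fun _ : ℝ => (0:ℝ)) x) x := by
    intro ζ x _
    exact hasDerivAt_const x _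
  have hric : ∀ ζ : ℝ, ∀ x ∈ Icc ζ (1:ℝ),
      (fun _ : ℝ => (0:ℝ)) x + ((fun _ : ℝ => -(1/2:ℝ)) x) ^ 2 = -(-(1/4 : ℝ)) := by
    intro ζ x _
    norm_num
  refine ⟨?_, ?_, ?_⟩
  · -- k1² = 1/2
    intro hk ζ hζ
    apply le_antisymm
    · obtain ⟨E, D, hE, hD, hmem⟩ := mem_value (lam := -(1/4)) hζ.2 (hconst ζ)
        continuousOn_const rfl (hric ζ)
      have hval : -(1/4) + (-(1/2) + k1 ^ 2) * E / D = -(1/4 : ℝ) := by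
        rw [hk]; ring
      rw [hval] at hmem
      rw [mu1_eq_sInf]
      exact csInf_le (RSet_bddBelow k1 ζ hζ.2) hmem
    · exact mu1_ge hζ.2 (hconst ζ) continuousOn_const (le_refl _)
        (by rw [hk]) (fun x hx => le_of_eq (hric ζ x hx))
  · -- k1² > 1/2
    intro hk
    have hk' : 1/2 < k1^2 := hk
    refine ⟨?_, ?_, ?_⟩
    · intro ζ₁ h₁ ζ₂ h₂ hlt
      obtain ⟨lam₁, hlam₁, hS₁⟩ := S_exists hk' (L := 1 - ζ₁) (by linarith [h₁.2])
      obtain ⟨lam₂, hlam₂, hS₂⟩ := S_exists hk' (L := 1 - ζ₂) (by linarith [h₂.2])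
      rw [mu1_eq_lam hk' h₁.1 h₁.2 hlam₁ hS₁, mu1_eq_lam hk' h₂.1 h₂.2 hlam₂ hS₂]
      by_contra h
      push_neg at h
      have := S_anti hk' hlam₂ h
      rw [hS₁, hS₂] at this
      linarith
    · rw [tendsto_atTop]
      intro M
      set M' : ℝ := max M 0 with hM'def
      have hM' : -(1/4) < M' := lt_of_lt_of_le (by norm_num) (le_max_right _ _)
      have hδ : 0 < Afun k1 M' (1/2) := S_pos hk' hM'
      have hnb : Ioi (1 - Afun k1 M' (1/2)) ∈ nhdsWithin (1:ℝ) (Ico (0:ℝ) 1) :=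
        mem_nhdsWithin_of_mem_nhds (Ioi_mem_nhds (by linarith))
      filter_upwards [hnb, self_mem_nhdsWithin] with ζ h1 h2
      obtain ⟨lam, hlam, hS⟩ := S_exists hk' (L := 1 - ζ) (by linarith [h2.2])
      rw [mu1_eq_lam hk' h2.1 h2.2 hlam hS]
      by_contra h
      push_neg at h
      have hle : lam ≤ M' := le_trans (le_of_lt h) (le_max_left _ _)
      have := S_anti hk' hlam hle
      rw [hS] at this
      have h3 : 1 - Afun k1 M' (1/2) < ζ := h1
      linarith
    · obtain ⟨lam, hlam, hS⟩ := S_exists hk' (L := (1:ℝ)) (by norm_num)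
      rw [mu1_eq_lam hk' (le_refl 0) (by norm_num) hlam (by rw [hS]; norm_num)]
      exact hlam
  · -- k1² < 1/2
    intro hk ζ hζ
    obtain ⟨E, D, hE, hD, hmem⟩ := mem_value (k1 := k1) (lam := -(1/4)) hζ.2 (hconst ζ)
      continuousOn_const rfl (hric ζ)
    have hlt : -(1/4) + (-(1/2) + k1 ^ 2) * E / D < -(1/4 : ℝ) := by
      have h1 : (-(1/2) + k1 ^ 2) < 0 := by linarith
      have h2 : 0 < E / D := div_pos hE hD
      have h3 : (-(1/2) + k1 ^ 2) * E / D = (-(1/2) + k1 ^ 2) * (E / D) := by ring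
      rw [h3]
      nlinarith [mul_pos (neg_pos.2 h1) h2]
    calc mu1 k1 ζ ≤ -(1/4) + (-(1/2) + k1 ^ 2) * E / D := by
          rw [mu1_eq_sInf]
          exact csInf_le (RSet_bddBelow k1 ζ hζ.2) hmem
      _ < -(1/4) := hlt
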